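/- arXiv:2605.20756 — 3 statements merged into one kernel-verified Lean document; each statement's English description precedes it below -/
import Mathlib

section
/- Let p_1, …, p_m be i.i.d. real random variables with mean p and variance σ², and let λ ∈ ℝ and δ > 0 be such that almost surely p_j + λ ≥ δ. Let p̄ = (1/m)Σ_j p_j. Then the uncorrected damped inverse is biased upward with bias of order 1/m: 0 ≤ E[1/(p̄ + λ)] − 1/(p + λ) ≤ σ² / (m · δ · (p + λ)²). -/
open MeasureTheory ProbabilityTheory

/-- **Upward bias of the uncorrected damped inverse, of order `1/m`.**
For i.i.d. `p_1, …, p_m` with mean `pm` and variance `σ2`, with `p_j + lam ≥ δ > 0`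
almost surely, the damped inverse of the sample mean satisfies
`0 ≤ E[1/(p̄ + lam)] − 1/(pm + lam) ≤ σ2 / (m · δ · (pm + lam)²)`. -/
theorem damped_inverse_bias_order_one_over_m
    {Ω : Type*} [MeasurableSpace Ω] (μ : Measure Ω) [IsProbabilityMeasure μ]
    (m : ℕ) (hm : 0 < m)
    (p : Fin m → Ω → ℝ)
    (hmeas : ∀ j, Measurable (p j))
    (hindep : iIndepFun p μ)
    (hident : ∀ i j, IdentDistrib (p i) (p j) μ μ)
    (pm σ2 lam δ : ℝ) (hδ : 0 < δ)
    (hint : ∀ j, Integrable (p j) μ)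
    (hmean : ∀ j, ∫ ω, p j ω ∂μ = pm)
    (hvarint : ∀ j, Integrable (fun ω => (p j ω - pm) ^ 2) μ)
    (hvar : ∀ j, ∫ ω, (p j ω - pm) ^ 2 ∂μ = σ2)
    (hbdd : ∀ j, ∀ᵐ ω ∂μ, δ ≤ p j ω + lam) :
    0 ≤ (∫ ω, 1 / ((1 / (m : ℝ)) * ∑ j, p j ω + lam) ∂μ) - 1 / (pm + lam) ∧
    (∫ ω, 1 / ((1 / (m : ℝ)) * ∑ j, p j ω + lam) ∂μ) - 1 / (pm + lam)
      ≤ σ2 / (m * δ * (pm + lam) ^ 2) := by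
  classical
  have hm0 : (m : ℝ) ≠ 0 := Nat.cast_ne_zero.2 hm.ne'
  have hmpos : (0 : ℝ) < m := Nat.cast_pos.2 hm
  set a : ℝ := pm + lam with ha_def
  set B : Ω → ℝ := fun ω => (1 / (m : ℝ)) * ∑ j, p j ω + lam with hB_def
  have hBmeas : Measurable B :=
    (measurable_const.mul (Finset.measurable_sum _ fun j _ => hmeas j)).add measurable_const
  -- a.e. lower bound on the denominator
  have hBδ : ∀ᵐ ω ∂μ, δ ≤ B ω := by
    have h := ae_all_iff.2 hbdd
    filter_upwards [h] with ω hω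
    have h1 : δ * m ≤ ∑ j, (p j ω + lam) := by
      calc δ * m = ∑ _j : Fin m, δ := by simp [mul_comm]
        _ ≤ _ := Finset.sum_le_sum fun j _ => hω j
    have h2 : ∑ j, (p j ω + lam) = (∑ j, p j ω) + m * lam := by
      rw [Finset.sum_add_distrib]; simp [mul_comm]
    have hBeq : B ω = (1 / (m : ℝ)) * ∑ j, (p j ω + lam) := by
      rw [h2, hB_def]; field_simp
    rw [hBeq]
    calc δ = (1 / (m : ℝ)) * (δ * m) := by field_simp
      _ ≤ _ := mul_le_mul_of_nonneg_left h1 (by positivity)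
  -- lower bound on the limiting denominator
  have haδ : δ ≤ a := by
    have h1 : ∫ _ω, (δ : ℝ) ∂μ ≤ ∫ ω, (p ⟨0, hm⟩ ω + lam) ∂μ :=
      integral_mono_ae (integrable_const δ)
        ((hint ⟨0, hm⟩).add (integrable_const lam)) (hbdd ⟨0, hm⟩)
    rw [integral_add (hint ⟨0, hm⟩) (integrable_const lam)] at h1
    simpa [hmean ⟨0, hm⟩] using h1
  have ha : 0 < a := hδ.trans_le haδ
  -- L² membership
  have hL2 : ∀ j, MemLp (p j) 2 μ := by
    intro j
    rw [memLp_two_iff_integrable_sq (hmeas j).aestronglyMeasurable]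
    have he : (fun ω => p j ω ^ 2)
        = fun ω => ((p j ω - pm) ^ 2 + (2 * pm) * p j ω - pm ^ 2) := by
      funext ω; ring
    rw [he]
    exact ((hvarint j).add ((hint j).const_mul _)).sub (integrable_const _)
  have hvarj : ∀ j, variance (p j) μ = σ2 := by
    intro j
    rw [show variance (p j) μ = ∫ x, ((p j - fun _ => ∫ ω, p j ω ∂μ) ^ (2 : ℕ) : Ω → ℝ) x ∂μ from
      variance_eq_integral (hmeas j).aemeasurable]
    have he : ((p j - fun _ => ∫ ω, p j ω ∂μ) ^ (2 : ℕ))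
        = fun ω => (p j ω - pm) ^ 2 := by
      funext ω; simp [hmean j]
    rw [he, hvar j]
  have hT2 : MemLp (∑ j, p j) 2 μ := memLp_finset_sum' _ fun j _ => hL2 j
  have hvarT : variance (∑ j, p j) μ = m * σ2 := by
    rw [IndepFun.variance_sum (fun i _ => hL2 i)
      (fun i _ j _ hij => hindep.indepFun hij)]
    simp [hvarj, Finset.sum_const, nsmul_eq_mul]
  -- the sample mean
  have hintsum : Integrable (fun ω => ∑ j, p j ω) μ :=
    integrable_finset_sum _ fun j _ => hint j
  have hmeanS : ∫ ω, (1 / (m : ℝ)) * ∑ j, p j ω ∂μ = pm := by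
    rw [integral_const_mul, integral_finset_sum _ fun j _ => hint j]
    simp only [hmean, Finset.sum_const, Finset.card_univ, Fintype.card_fin, nsmul_eq_mul]
    field_simp
  have hSc : MemLp (fun ω => (1 / (m : ℝ)) * ∑ j, p j ω) 2 μ := by
    have h := hT2.const_mul (1 / (m : ℝ))
    have he : (fun ω => (1 / (m : ℝ)) * (∑ j, p j) ω)
        = fun ω => (1 / (m : ℝ)) * ∑ j, p j ω := by
      funext ω; simp
    rwa [he] at h
  have hvarS : variance (fun ω => (1 / (m : ℝ)) * ∑ j, p j ω) μ = σ2 / m := by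
    have h := variance_smul (1 / (m : ℝ)) (∑ j, p j) μ
    have he : ((1 / (m : ℝ)) • (∑ j, p j))
        = fun ω => (1 / (m : ℝ)) * ∑ j, p j ω := by
      funext ω; simp
    rw [he, hvarT] at h
    rw [h]; field_simp
  -- second moment of B - a
  have hBa : (fun ω => B ω - a) = fun ω => (1 / (m : ℝ)) * ∑ j, p j ω - pm := by
    funext ω; rw [hB_def, ha_def]; ring
  have hBa2 : MemLp (fun ω => B ω - a) 2 μ := by
    rw [hBa]; exact hSc.sub (memLp_const pm)
  have hG2int : Integrable (fun ω => (B ω - a) ^ 2) μ :=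
    (memLp_two_iff_integrable_sq hBa2.aestronglyMeasurable).1 hBa2
  have hG2 : ∫ ω, (B ω - a) ^ 2 ∂μ = σ2 / m := by
    have h : variance (fun ω => (1 / (m : ℝ)) * ∑ j, p j ω) μ
        = ∫ x, (((fun ω => (1 / (m : ℝ)) * ∑ j, p j ω)
          - fun _ => ∫ ω, (1 / (m : ℝ)) * ∑ j, p j ω ∂μ) ^ (2 : ℕ) : Ω → ℝ) x ∂μ :=
      variance_eq_integral hSc.aestronglyMeasurable.aemeasurable
    have he : (((fun ω => (1 / (m : ℝ)) * ∑ j, p j ω)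
        - fun _ => ∫ ω, (1 / (m : ℝ)) * ∑ j, p j ω ∂μ) ^ (2 : ℕ))
        = fun ω => (B ω - a) ^ 2 := by
      funext ω
      simp only [Pi.pow_apply, Pi.sub_apply, hmeanS, hB_def, ha_def]
      ring
    rw [he] at h
    rw [← h, hvarS]
  -- integrability of the integrand
  have hBint : Integrable B μ := (hintsum.const_mul _).add (integrable_const lam)
  have hmeanB : ∫ ω, B ω ∂μ = a := by
    simp only [hB_def]
    rw [integral_add (hintsum.const_mul _) (integrable_const lam), hmeanS]
    simp [ha_def]
  have hinv_meas : Measurable fun ω => 1 / B ω := measurable_const.div hBmeas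
  have hinv_int : Integrable (fun ω => 1 / B ω) μ := by
    apply Integrable.mono' (integrable_const (1 / δ)) hinv_meas.aestronglyMeasurable
    filter_upwards [hBδ] with ω hω
    have hB0 : 0 < B ω := hδ.trans_le hω
    rw [Real.norm_eq_abs, abs_of_nonneg (by positivity)]
    exact one_div_le_one_div_of_le hδ hω
  -- the remainder term
  have hRmeas : Measurable fun ω => (B ω - a) ^ 2 / (a ^ 2 * B ω) :=
    ((hBmeas.sub measurable_const).pow_const 2).div (measurable_const.mul hBmeas)
  have hRbound : ∀ᵐ ω ∂μ, (B ω - a) ^ 2 / (a ^ 2 * B ω)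
      ≤ (1 / (a ^ 2 * δ)) * (B ω - a) ^ 2 := by
    filter_upwards [hBδ] with ω hω
    have hB0 : 0 < B ω := hδ.trans_le hω
    rw [one_div_mul_eq_div]
    gcongr
  have hRnn : ∀ᵐ ω ∂μ, 0 ≤ (B ω - a) ^ 2 / (a ^ 2 * B ω) := by
    filter_upwards [hBδ] with ω hω
    have hB0 : 0 < B ω := hδ.trans_le hω
    positivity
  have hRint : Integrable (fun ω => (B ω - a) ^ 2 / (a ^ 2 * B ω)) μ := by
    apply Integrable.mono' (hG2int.const_mul (1 / (a ^ 2 * δ))) hRmeas.aestronglyMeasurable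
    filter_upwards [hRbound, hRnn] with ω h1 h2
    rw [Real.norm_eq_abs, abs_of_nonneg h2]
    exact h1
  -- pointwise identity
  have hkey : ∀ᵐ ω ∂μ, 1 / B ω
      = (1 / a + (-(1 / a ^ 2)) * (B ω - a)) + (B ω - a) ^ 2 / (a ^ 2 * B ω) := by
    filter_upwards [hBδ] with ω hω
    have hB0 : B ω ≠ 0 := (hδ.trans_le hω).ne'
    field_simp
    ring
  have hcent : Integrable (fun ω => B ω - a) μ := hBint.sub (integrable_const a)
  have hlin : Integrable (fun ω => 1 / a + (-(1 / a ^ 2)) * (B ω - a)) μ :=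
    (integrable_const _).add (hcent.const_mul _)
  have hsplit : (∫ ω, 1 / B ω ∂μ)
      = 1 / a + ∫ ω, (B ω - a) ^ 2 / (a ^ 2 * B ω) ∂μ := by
    rw [integral_congr_ae hkey, integral_add hlin hRint,
      integral_add (integrable_const _) (hcent.const_mul _),
      integral_const_mul, integral_sub hBint (integrable_const a), hmeanB]
    simp
  have hR_nonneg : 0 ≤ ∫ ω, (B ω - a) ^ 2 / (a ^ 2 * B ω) ∂μ :=
    integral_nonneg_of_ae hRnn
  have hR_le : (∫ ω, (B ω - a) ^ 2 / (a ^ 2 * B ω) ∂μ) ≤ σ2 / (m * δ * a ^ 2) := by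
    calc (∫ ω, (B ω - a) ^ 2 / (a ^ 2 * B ω) ∂μ)
        ≤ ∫ ω, (1 / (a ^ 2 * δ)) * (B ω - a) ^ 2 ∂μ :=
          integral_mono_ae hRint (hG2int.const_mul _) hRbound
      _ = (1 / (a ^ 2 * δ)) * (σ2 / m) := by rw [integral_const_mul, hG2]
      _ = σ2 / (m * δ * a ^ 2) := by rw [one_div_mul_eq_div, div_div]; ring_nf
  constructor
  · rw [hsplit]; linarith
  · rw [hsplit]; linarith
end

section
/- (Nonconvex stationarity bound.) Let (Ω, F, P) be a probability space with filtration (F_t)_{t≥0}, and let f : ℝ^d → ℝ be differentiable with L-Lipschitz gradient (L > 0) and bounded below by f⋆. Fix constants 0 < μ_H ≤ M_H, 0 ≤ ρ < 1, σ ≥ 0, and a step size η with 0 < η ≤ μ_H(1−ρ) / (L (M_H + ρ μ_H)²). Let θ_0 ∈ ℝ^d be deterministic and let (θ_t) and (û_t) be random sequences in ℝ^d with θ_t F_t-measurable, û_t F_{t+1}-measurable and square-integrable, and θ_{t+1} = θ_t − η û_t. Suppose that for every t, almost surely there exists an F_t-measurable random symmetric d×d matrix H_t with μ_H I ⪯ H_t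 ⪯ M_H I such that ‖E[û_t | F_t] − H_t ∇f(θ_t)‖ ≤ ρ μ_H ‖∇f(θ_t)‖, and E[‖û_t − E[û_t | F_t]‖² | F_t] ≤ σ². Then for every T ≥ 1, (1/T) Σ_{t=0}^{T−1} E[‖∇f(θ_t)‖²] ≤ 2 (f(θ_0) − f⋆) / (η T μ_H (1−ρ)) + L η σ² / (μ_H (1−ρ)). -/
open MeasureTheory ProbabilityTheory
open scoped RealInnerProductSpace


open MeasureTheory ProbabilityTheory InnerProductSpace
open scoped RealInnerProductSpace

section Aux

variable {Ω : Type*} {m m0 : MeasurableSpace Ω} {μ : Measure Ω} [IsFiniteMeasure μ]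
variable {E' F' : Type*} [NormedAddCommGroup E'] [NormedSpace ℝ E'] [CompleteSpace E']
  [NormedAddCommGroup F'] [NormedSpace ℝ F'] [CompleteSpace F']

/-- Conditional expectation commutes with continuous linear maps. -/
lemma condexp_clm_comm (hm : m ≤ m0) (T : E' →L[ℝ] F') {f : Ω → E'} (hf : Integrable f μ) :
    (fun ω => T ((μ[f|m]) ω)) =ᵐ[μ] μ[fun ω => T (f ω)|m] := by
  haveI : SigmaFinite (μ.trim hm) := by infer_instance
  refine ae_eq_condExp_of_forall_setIntegral_eq hm (T.integrable_comp hf) ?_ ?_ ?_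
  · intro s _ _
    exact (T.integrable_comp integrable_condExp).integrableOn
  · intro s hs hμs
    rw [T.integral_comp_comm integrable_condExp.integrableOn,
      setIntegral_condExp hm hf hs, T.integral_comp_comm hf.integrableOn]
  · exact StronglyMeasurable.aestronglyMeasurable
      (T.continuous.comp_stronglyMeasurable stronglyMeasurable_condExp)

omit [IsFiniteMeasure μ] in
lemma memLp_integrable_inner {G : Type*} [NormedAddCommGroup G] [InnerProductSpace ℝ G]
    {f g : Ω → G} (hf : MemLp f 2 μ) (hg : MemLp g 2 μ) :
    Integrable (fun ω => ⟪f ω, g ω⟫) μ := by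
  have := L2.integrable_inner (𝕜 := ℝ) (hf.toLp f) (hg.toLp g)
  refine this.congr ?_
  filter_upwards [hf.coeFn_toLp, hg.coeFn_toLp] with ω h1 h2
  rw [h1, h2]

omit [IsFiniteMeasure μ] in
lemma memLp_integrable_mul {f g : Ω → ℝ} (hf : MemLp f 2 μ) (hg : MemLp g 2 μ) :
    Integrable (fun ω => f ω * g ω) μ := by
  have := memLp_integrable_inner hf hg
  simpa [RCLike.inner_apply, mul_comm] using this

variable {d : ℕ}

/-- key orthogonality: for `m`-strongly measurable `g` in L², `∫ ⟪g, u⟫ = ∫ ⟪g, E[u|m]⟫`. -/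
lemma integral_inner_condexp (hm : m ≤ m0)
    {g u : Ω → EuclideanSpace ℝ (Fin d)}
    (hgm : StronglyMeasurable[m] g) (hg : MemLp g 2 μ)
    (hu : MemLp u 2 μ) (hcu : MemLp (μ[u|m]) 2 μ) :
    ∫ ω, ⟪g ω, u ω⟫ ∂μ = ∫ ω, ⟪g ω, (μ[u|m]) ω⟫ ∂μ := by
  haveI : SigmaFinite (μ.trim hm) := by infer_instance
  have hproj : ∀ i : Fin d, MemLp (fun ω => u ω i) 2 μ ∧ MemLp (fun ω => g ω i) 2 μ ∧
      MemLp (fun ω => (μ[u|m]) ω i) 2 μ := by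
    intro i
    refine ⟨?_, ?_, ?_⟩
    · have := (EuclideanSpace.proj i : EuclideanSpace ℝ (Fin d) →L[ℝ] ℝ).comp_memLp' hu
      exact this
    · have := (EuclideanSpace.proj i : EuclideanSpace ℝ (Fin d) →L[ℝ] ℝ).comp_memLp' hg
      exact this
    · have := (EuclideanSpace.proj i : EuclideanSpace ℝ (Fin d) →L[ℝ] ℝ).comp_memLp' hcu
      exact this
  have hinner : ∀ (a b : EuclideanSpace ℝ (Fin d)), ⟪a, b⟫ = ∑ i, a i * b i := by
    intro a b
    simp [PiLp.inner_apply, RCLike.inner_apply, mul_comm]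
  simp_rw [hinner]
  rw [integral_finset_sum, integral_finset_sum]
  · refine Finset.sum_congr rfl fun i _ => ?_
    have hgi : StronglyMeasurable[m] fun ω => g ω i :=
      ((EuclideanSpace.proj i : EuclideanSpace ℝ (Fin d) →L[ℝ] ℝ).continuous.comp_stronglyMeasurable hgm)
    have hint1 : Integrable (fun ω => g ω i * u ω i) μ :=
      (memLp_integrable_mul (hproj i).2.1 (hproj i).1)
    have hint2 : Integrable (fun ω => u ω i) μ := (hproj i).1.integrable (by norm_num)
    have hpull := condExp_mul_of_stronglyMeasurable_left (μ := μ) hgi hint1 hint2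
    have hcoord : (μ[fun ω => u ω i|m]) =ᵐ[μ] fun ω => (μ[u|m]) ω i := by
      have := condexp_clm_comm (μ := μ) hm
        (EuclideanSpace.proj i : EuclideanSpace ℝ (Fin d) →L[ℝ] ℝ)
        (hu.integrable (by norm_num))
      exact this.symm
    calc ∫ ω, g ω i * u ω i ∂μ = ∫ ω, (μ[fun ω => g ω i * u ω i|m]) ω ∂μ :=
          (integral_condExp hm).symm
      _ = ∫ ω, g ω i * (μ[fun ω => u ω i|m]) ω ∂μ := by
          refine integral_congr_ae ?_
          filter_upwards [hpull] with ω h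
          exact h
      _ = ∫ ω, g ω i * (μ[u|m]) ω i ∂μ := by
          refine integral_congr_ae ?_
          filter_upwards [hcoord] with ω h
          rw [h]
  · intro i _
    exact (memLp_integrable_mul (hproj i).2.1 (hproj i).2.2)
  · intro i _
    exact (memLp_integrable_mul (hproj i).2.1 (hproj i).1)

end Aux

section Det

variable {d : ℕ}
local notation "E" => EuclideanSpace ℝ (Fin d)

/-- Derivative of `f` along a line. -/
lemma line_hasDerivAt (f : E → ℝ) (hdiff : Differentiable ℝ f)
    (x v : E) (t : ℝ) :
    HasDerivAt (fun s : ℝ => f (x + s • v)) ⟪gradient f (x + t • v), v⟫ t := by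
  have hline : HasDerivAt (fun s : ℝ => x + s • v) v t := by
    simpa using ((hasDerivAt_id t).smul_const v).const_add x
  have hf := (hdiff (x + t • v)).hasGradientAt
  rw [hasGradientAt_iff_hasFDerivAt] at hf
  have := hf.comp_hasDerivAt t hline
  simpa [InnerProductSpace.toDual_apply_apply, Function.comp_def] using this

/-- Descent lemma. -/
lemma descent_lemma (f : E → ℝ) (L : ℝ)
    (hdiff : Differentiable ℝ f)
    (hlip : ∀ x y, ‖gradient f x - gradient f y‖ ≤ L * ‖x - y‖) (x v : E) :
    f (x + v) ≤ f x + ⟪gradient f x, v⟫ + L / 2 * ‖v‖ ^ 2 := by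
  set g : ℝ → ℝ := fun t => f (x + t • v) - t * ⟪gradient f x, v⟫ - L / 2 * t ^ 2 * ‖v‖ ^ 2 with hg
  have hd : ∀ t : ℝ, HasDerivAt g
      (⟪gradient f (x + t • v), v⟫ - ⟪gradient f x, v⟫ - L * t * ‖v‖ ^ 2) t := by
    intro t
    have h1 := line_hasDerivAt f hdiff x v t
    have h2 : HasDerivAt (fun s : ℝ => s * ⟪gradient f x, v⟫) ⟪gradient f x, v⟫ t := by
      simpa using (hasDerivAt_id t).mul_const _
    have h3 : HasDerivAt (fun s : ℝ => L / 2 * s ^ 2 * ‖v‖ ^ 2) (L * t * ‖v‖ ^ 2) t := by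
      have := ((hasDerivAt_pow 2 t).const_mul (L / 2)).mul_const (‖v‖ ^ 2)
      refine this.congr_deriv ?_
      ring
    exact (h1.sub h2).sub h3
  have hmono : AntitoneOn g (Set.Icc 0 1) := by
    apply antitoneOn_of_deriv_nonpos (convex_Icc 0 1)
    · exact (fun t _ => ((hd t).continuousAt.continuousWithinAt))
    · intro t ht
      exact (hd t).differentiableAt.differentiableWithinAt
    · intro t ht
      rw [interior_Icc] at ht
      rw [(hd t).deriv]
      have hb : ⟪gradient f (x + t • v) - gradient f x, v⟫ ≤ L * t * ‖v‖ ^ 2 := by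
        calc ⟪gradient f (x + t • v) - gradient f x, v⟫
            ≤ ‖gradient f (x + t • v) - gradient f x‖ * ‖v‖ := real_inner_le_norm _ _
          _ ≤ (L * ‖(x + t • v) - x‖) * ‖v‖ := by
              apply mul_le_mul_of_nonneg_right (hlip _ _) (norm_nonneg _)
          _ = L * t * ‖v‖ ^ 2 := by
              rw [add_sub_cancel_left, norm_smul]
              simp [Real.norm_eq_abs, abs_of_pos ht.1]
              ring
      rw [inner_sub_left] at hb
      linarith
  have h01 := hmono (Set.mem_Icc.2 ⟨le_refl 0, zero_le_one⟩)
    (Set.mem_Icc.2 ⟨zero_le_one, le_refl 1⟩) zero_le_one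
  simp only [hg, zero_smul, add_zero, one_smul, zero_mul, sub_zero, mul_zero, zero_pow,
    one_pow, mul_one] at h01
  linarith

lemma opnorm_bound_of_quadratic (B : E →ₗ[ℝ] E) (hsym : B.IsSymmetric) (M : ℝ) (hM : 0 ≤ M)
    (hq : ∀ x : E, 0 ≤ ⟪x, B x⟫ ∧ ⟪x, B x⟫ ≤ M * ‖x‖ ^ 2) (y : E) :
    ‖B y‖ ≤ M * ‖y‖ := by
  have key : ∀ a b : E, ⟪a, B b⟫ ≤ M * (‖a‖ ^ 2 + ‖b‖ ^ 2) / 2 := by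
    intro a b
    have h1 := (hq (a + b)).2
    have h2 := (hq (a - b)).1
    have hba : ⟪b, B a⟫ = ⟪a, B b⟫ := by
      rw [real_inner_comm]; exact hsym a b
    have e1 : ⟪a + b, B (a + b)⟫
        = ⟪a, B a⟫ + 2 * ⟪a, B b⟫ + ⟪b, B b⟫ := by
      simp only [map_add, inner_add_left, inner_add_right]
      linarith
    have e2 : ⟪a - b, B (a - b)⟫
        = ⟪a, B a⟫ - 2 * ⟪a, B b⟫ + ⟪b, B b⟫ := by
      simp only [map_sub, inner_sub_left, inner_sub_right]
      linarith
    have n1 : ‖a + b‖ ^ 2 = ‖a‖ ^ 2 + 2 * ⟪a, b⟫ + ‖b‖ ^ 2 := norm_add_sq_real a b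
    have n2 : ‖a - b‖ ^ 2 = ‖a‖ ^ 2 - 2 * ⟪a, b⟫ + ‖b‖ ^ 2 := norm_sub_sq_real a b
    nlinarith [sq_nonneg ‖a - b‖]
  by_cases hy : y = 0
  · simp [hy, mul_nonneg hM (norm_nonneg _)]
  by_cases hBy : B y = 0
  · rw [hBy, norm_zero]; exact mul_nonneg hM (norm_nonneg _)
  · have hBypos : 0 < ‖B y‖ := norm_pos_iff.2 hBy
    have hypos : 0 < ‖y‖ := norm_pos_iff.2 hy
    set a : E := (‖y‖ / ‖B y‖) • B y with ha
    have hna : ‖a‖ = ‖y‖ := by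
      rw [ha, norm_smul, Real.norm_eq_abs, abs_of_pos (div_pos hypos hBypos),
        div_mul_cancel₀ _ hBypos.ne']
    have hinner : ⟪a, B y⟫ = ‖y‖ * ‖B y‖ := by
      rw [ha, real_inner_smul_left, real_inner_self_eq_norm_sq]
      field_simp
    have := key a y
    rw [hinner, hna] at this
    have h2 : ‖y‖ * ‖B y‖ ≤ M * ‖y‖ * ‖y‖ := by nlinarith
    calc ‖B y‖ = ‖y‖ * ‖B y‖ / ‖y‖ := by field_simp
      _ ≤ M * ‖y‖ * ‖y‖ / ‖y‖ := by gcongr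
      _ = M * ‖y‖ := by field_simp

/-- two-sided growth bound used for integrability. -/
lemma f_growth (f : E → ℝ) (L : ℝ) (hL : 0 < L)
    (hdiff : Differentiable ℝ f)
    (hlip : ∀ x y, ‖gradient f x - gradient f y‖ ≤ L * ‖x - y‖) (x0 y : E) :
    |f y| ≤ |f x0| + ‖gradient f x0‖ * ‖y - x0‖ + (3 * L / 2) * ‖y - x0‖ ^ 2 := by
  have d1 : f y ≤ f x0 + ⟪gradient f x0, y - x0⟫ + L / 2 * ‖y - x0‖ ^ 2 := by
    have := descent_lemma f L hdiff hlip x0 (y - x0)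
    rwa [add_sub_cancel] at this
  have d2 : f x0 ≤ f y + ⟪gradient f y, x0 - y⟫ + L / 2 * ‖x0 - y‖ ^ 2 := by
    have := descent_lemma f L hdiff hlip y (x0 - y)
    rwa [add_sub_cancel] at this
  have hginner1 : |⟪gradient f x0, y - x0⟫| ≤ ‖gradient f x0‖ * ‖y - x0‖ :=
    abs_real_inner_le_norm _ _
  have hginner2 : |⟪gradient f y, x0 - y⟫| ≤ ‖gradient f y‖ * ‖x0 - y‖ :=
    abs_real_inner_le_norm _ _
  have hgy : ‖gradient f y‖ ≤ ‖gradient f x0‖ + L * ‖y - x0‖ := by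
    have := hlip y x0
    have h := norm_sub_norm_le (gradient f y) (gradient f x0)
    linarith
  have hsymm : ‖x0 - y‖ = ‖y - x0‖ := norm_sub_rev _ _
  rw [hsymm] at d2 hginner2
  have habs := abs_le.1 hginner1
  have habs2 := abs_le.1 hginner2
  rw [abs_le]
  constructor
  · have := neg_abs_le (f x0)
    nlinarith [norm_nonneg (y - x0), mul_le_mul_of_nonneg_right hgy (norm_nonneg (y - x0))]
  · have := le_abs_self (f x0)
    nlinarith [norm_nonneg (y - x0)]

end Det

set_option maxHeartbeats 1000000 in
/-- **Nonconvex stationarity bound for biased preconditioned stochastic updates.**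
Let `f` be differentiable with `L`-Lipschitz gradient and bounded below by `fstar`.
With step size `0 < η ≤ μ_H(1−ρ)/(L(M_H+ρμ_H)²)`, updates `θ_{t+1} = θ_t − η û_t`
adapted to a filtration `F`, conditional-mean bias dominated by an `F_t`-measurable
symmetric preconditioner `H_t` with `μ_H I ⪯ H_t ⪯ M_H I` via
`‖E[û_t|F_t] − H_t ∇f(θ_t)‖ ≤ ρ μ_H ‖∇f(θ_t)‖`, and conditional variance at most `σ²`,
the average squared gradient norm satisfies the stated bound. -/
theorem nonconvex_stationarity_bound
    {Ω : Type*} {m0 : MeasurableSpace Ω} (μ : Measure Ω) [IsProbabilityMeasure μ]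
    (F : Filtration ℕ m0)
    {d : ℕ} (f : EuclideanSpace ℝ (Fin d) → ℝ)
    (L : ℝ) (hL : 0 < L)
    (hdiff : Differentiable ℝ f)
    (hlip : ∀ x y, ‖gradient f x - gradient f y‖ ≤ L * ‖x - y‖)
    (fstar : ℝ) (hbdd : ∀ x, fstar ≤ f x)
    (muH MH ρ σ η : ℝ)
    (hmuH : 0 < muH) (hMH : muH ≤ MH)
    (hρ0 : 0 ≤ ρ) (hρ1 : ρ < 1) (hσ : 0 ≤ σ)
    (hη0 : 0 < η) (hη : η ≤ muH * (1 - ρ) / (L * (MH + ρ * muH) ^ 2))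
    (θ0 : EuclideanSpace ℝ (Fin d))
    (θ u : ℕ → Ω → EuclideanSpace ℝ (Fin d))
    (hθ0 : θ 0 = fun _ => θ0)
    (hθmeas : ∀ t, StronglyMeasurable[F t] (θ t))
    (humeas : ∀ t, StronglyMeasurable[F (t + 1)] (u t))
    (huL2 : ∀ t, MemLp (u t) 2 μ)
    (hrec : ∀ t ω, θ (t + 1) ω = θ t ω - η • u t ω)
    (hbias : ∀ t, ∃ H : Ω → Matrix (Fin d) (Fin d) ℝ,
      (∀ i j, Measurable[F t] fun ω => H ω i j) ∧
      ∀ᵐ ω ∂μ,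
        (H ω).IsSymm ∧
        (∀ x : EuclideanSpace ℝ (Fin d),
          muH * ‖x‖ ^ 2 ≤ ⟪x, Matrix.toEuclideanLin (H ω) x⟫ ∧
          ⟪x, Matrix.toEuclideanLin (H ω) x⟫ ≤ MH * ‖x‖ ^ 2) ∧
        ‖(μ[u t | F t]) ω - Matrix.toEuclideanLin (H ω) (gradient f (θ t ω))‖
          ≤ ρ * muH * ‖gradient f (θ t ω)‖)
    (hvar : ∀ t, ∀ᵐ ω ∂μ,
      (μ[(fun ω' => ‖u t ω' - (μ[u t | F t]) ω'‖ ^ 2) | F t]) ω ≤ σ ^ 2) :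
    ∀ T : ℕ, 1 ≤ T →
      (1 / (T : ℝ)) * ∑ t ∈ Finset.range T, ∫ ω, ‖gradient f (θ t ω)‖ ^ 2 ∂μ
        ≤ 2 * (f θ0 - fstar) / (η * T * muH * (1 - ρ))
          + L * η * σ ^ 2 / (muH * (1 - ρ)) := by
  have h1ρ : 0 < 1 - ρ := by linarith
  have hMH0 : 0 < MH := lt_of_lt_of_le hmuH hMH
  have hcpos : 0 < MH + ρ * muH := by positivity
  set c : ℝ := MH + ρ * muH with hc
  -- continuity of the gradient
  have hgradcont : Continuous (gradient f) := by
    have hlw : LipschitzWith (Real.toNNReal L) (gradient f) := by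
      apply LipschitzWith.of_dist_le_mul
      intro x y
      rw [dist_eq_norm, dist_eq_norm, Real.coe_toNNReal _ hL.le]
      exact hlip x y
    exact hlw.continuous
  have hstep : L * η * c ^ 2 ≤ muH * (1 - ρ) := by
    have hden : 0 < L * c ^ 2 := by positivity
    rw [le_div_iff₀ hden] at hη
    nlinarith
  set g : ℕ → Ω → EuclideanSpace ℝ (Fin d) := fun t ω => gradient f (θ t ω) with hgdef
  have hgmeas : ∀ t, StronglyMeasurable[F t] (g t) :=
    fun t => hgradcont.comp_stronglyMeasurable (hθmeas t)
  have hθL2 : ∀ t, MemLp (θ t) 2 μ := by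
    intro t
    induction t with
    | zero => rw [hθ0]; exact memLp_const θ0
    | succ n ih =>
        have : θ (n + 1) = fun ω => θ n ω - η • u n ω := funext (hrec n)
        rw [this]
        exact ih.sub (((huL2 n).const_smul η))
  have hθsub : ∀ t, MemLp (fun ω => θ t ω - θ0) 2 μ :=
    fun t => (hθL2 t).sub (memLp_const θ0)
  have hgL2 : ∀ t, MemLp (g t) 2 μ := by
    intro t
    refine MemLp.mono' ((memLp_const ‖gradient f θ0‖).add (((hθsub t).norm).const_mul L))
      ((hgmeas t).mono (F.le t)).aestronglyMeasurable ?_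
    refine Filter.Eventually.of_forall fun ω => ?_
    have h := hlip (θ t ω) θ0
    have h2 := norm_sub_norm_le (gradient f (θ t ω)) (gradient f θ0)
    simp only [hgdef, Pi.add_apply]
    calc ‖gradient f (θ t ω)‖ ≤ ‖gradient f θ0‖ + L * ‖θ t ω - θ0‖ := by linarith
      _ = _ := by norm_num
  have hgsqint : ∀ t, Integrable (fun ω => ‖g t ω‖ ^ 2) μ := by
    intro t
    exact (memLp_two_iff_integrable_sq_norm
      ((hgmeas t).mono (F.le t)).aestronglyMeasurable).1 (hgL2 t)
  have hgsqnonneg : ∀ t, 0 ≤ ∫ ω, ‖g t ω‖ ^ 2 ∂μ :=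
    fun t => integral_nonneg fun ω => by positivity
  have husqint : ∀ t, Integrable (fun ω => ‖u t ω‖ ^ 2) μ := by
    intro t
    exact (memLp_two_iff_integrable_sq_norm
      ((humeas t).mono (F.le (t+1))).aestronglyMeasurable).1 (huL2 t)
  have hfint : ∀ t, Integrable (fun ω => f (θ t ω)) μ := by
    intro t
    have hbint : Integrable (fun ω =>
        |f θ0| + ‖gradient f θ0‖ * ‖θ t ω - θ0‖ + (3 * L / 2) * ‖θ t ω - θ0‖ ^ 2) μ := by
      refine Integrable.add (Integrable.add (integrable_const _) ?_) ?_
      · exact (((hθsub t).integrable one_le_two).norm.const_mul _)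
      · exact (((memLp_two_iff_integrable_sq_norm
          (hθsub t).aestronglyMeasurable).1 (hθsub t)).const_mul _)
    refine Integrable.mono' hbint
      (hdiff.continuous.comp_stronglyMeasurable
        ((hθmeas t).mono (F.le t))).aestronglyMeasurable ?_
    refine Filter.Eventually.of_forall fun ω => ?_
    simpa [Real.norm_eq_abs] using f_growth f L hL hdiff hlip θ0 (θ t ω)
  -- the one-step inequality
  have key : ∀ t, ∫ ω, f (θ (t+1) ω) ∂μ + η * muH * (1 - ρ) / 2 * ∫ ω, ‖g t ω‖ ^ 2 ∂μ
      ≤ ∫ ω, f (θ t ω) ∂μ + L * η ^ 2 / 2 * σ ^ 2 := by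
    intro t
    have hv := hvar t
    obtain ⟨H, _, hHae⟩ := hbias t
    set ub : Ω → EuclideanSpace ℝ (Fin d) := μ[u t | F t] with hub
    -- pointwise a.e. consequences of the bias assumption
    have hae2 : ∀ᵐ ω ∂μ, ‖ub ω‖ ≤ c * ‖g t ω‖ ∧
        muH * (1 - ρ) * ‖g t ω‖ ^ 2 ≤ ⟪g t ω, ub ω⟫ := by
      filter_upwards [hHae] with ω hω
      obtain ⟨hsymm, hquad, hbias'⟩ := hω
      set B := Matrix.toEuclideanLin (H ω) with hBdef
      have hherm : (H ω).IsHermitian := by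
        rw [Matrix.IsHermitian]
        ext i j
        rw [Matrix.conjTranspose_apply, star_trivial]
        exact hsymm.apply i j
      have hBsym : LinearMap.IsSymmetric B := Matrix.isHermitian_iff_isSymmetric.1 hherm
      have hop : ‖B (g t ω)‖ ≤ MH * ‖g t ω‖ := by
        refine opnorm_bound_of_quadratic B hBsym MH hMH0.le (fun x => ?_) _
        exact ⟨le_trans (by positivity) (hquad x).1, (hquad x).2⟩
      constructor
      · calc ‖ub ω‖ = ‖B (g t ω) + (ub ω - B (g t ω))‖ := by rw [add_sub_cancel]
          _ ≤ ‖B (g t ω)‖ + ‖ub ω - B (g t ω)‖ := norm_add_le _ _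
          _ ≤ MH * ‖g t ω‖ + ρ * muH * ‖g t ω‖ := add_le_add hop hbias'
          _ = c * ‖g t ω‖ := by rw [hc]; ring
      · have hsplit : ⟪g t ω, ub ω⟫
            = ⟪g t ω, B (g t ω)⟫ + ⟪g t ω, ub ω - B (g t ω)⟫ := by
          rw [← inner_add_right]
          congr 1
          abel
        have h1 : muH * ‖g t ω‖ ^ 2 ≤ ⟪g t ω, B (g t ω)⟫ := (hquad _).1
        have h2 : |⟪g t ω, ub ω - B (g t ω)⟫| ≤ ‖g t ω‖ * ‖ub ω - B (g t ω)‖ :=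
          abs_real_inner_le_norm _ _
        have h3 : ‖g t ω‖ * ‖ub ω - B (g t ω)‖ ≤ ‖g t ω‖ * (ρ * muH * ‖g t ω‖) :=
          mul_le_mul_of_nonneg_left hbias' (norm_nonneg _)
        have h4 := (abs_le.1 h2).1
        rw [hsplit]
        nlinarith [norm_nonneg (g t ω)]
    have hubL2 : MemLp ub 2 μ := by
      refine MemLp.mono' (((hgL2 t).norm).const_mul c)
        (stronglyMeasurable_condExp.mono (F.le t)).aestronglyMeasurable ?_
      filter_upwards [hae2] with ω hω
      exact hω.1
    have hubsqint : Integrable (fun ω => ‖ub ω‖ ^ 2) μ :=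
      (memLp_two_iff_integrable_sq_norm
        (stronglyMeasurable_condExp.mono (F.le t)).aestronglyMeasurable).1 hubL2
    have hdL2 : MemLp (fun ω => u t ω - ub ω) 2 μ := (huL2 t).sub hubL2
    have hdsqint : Integrable (fun ω => ‖u t ω - ub ω‖ ^ 2) μ :=
      (memLp_two_iff_integrable_sq_norm hdL2.aestronglyMeasurable).1 hdL2
    have hinner_int : Integrable (fun ω => ⟪g t ω, u t ω⟫) μ :=
      memLp_integrable_inner (hgL2 t) (huL2 t)
    have hinner_int2 : Integrable (fun ω => ⟪g t ω, ub ω⟫) μ :=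
      memLp_integrable_inner (hgL2 t) hubL2
    -- I1 : projection identity
    have I1 : ∫ ω, ⟪g t ω, u t ω⟫ ∂μ = ∫ ω, ⟪g t ω, ub ω⟫ ∂μ :=
      integral_inner_condexp (F.le t) (hgmeas t) (hgL2 t) (huL2 t) hubL2
    -- I2 : lower bound for the inner product integral
    have I2 : muH * (1 - ρ) * ∫ ω, ‖g t ω‖ ^ 2 ∂μ ≤ ∫ ω, ⟪g t ω, ub ω⟫ ∂μ := by
      rw [← integral_const_mul]
      refine integral_mono_ae ((hgsqint t).const_mul _) hinner_int2 ?_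
      filter_upwards [hae2] with ω hω
      exact hω.2
    -- I3 : variance decomposition
    have horth : ∫ ω, ⟪ub ω, u t ω - ub ω⟫ ∂μ = 0 := by
      have e1 : ∫ ω, ⟪ub ω, u t ω⟫ ∂μ = ∫ ω, ⟪ub ω, ub ω⟫ ∂μ :=
        integral_inner_condexp (F.le t) stronglyMeasurable_condExp hubL2 (huL2 t) hubL2
      have : (fun ω => ⟪ub ω, u t ω - ub ω⟫)
          = fun ω => ⟪ub ω, u t ω⟫ - ⟪ub ω, ub ω⟫ := by
        funext ω; rw [inner_sub_right]
      rw [this, integral_sub (memLp_integrable_inner hubL2 (huL2 t))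
        (memLp_integrable_inner hubL2 hubL2), e1, sub_self]
    have hvarint : ∫ ω, ‖u t ω - ub ω‖ ^ 2 ∂μ ≤ σ ^ 2 := by
      have e1 : ∫ ω, ‖u t ω - ub ω‖ ^ 2 ∂μ
          = ∫ ω, (μ[(fun ω' => ‖u t ω' - ub ω'‖ ^ 2) | F t]) ω ∂μ :=
        (integral_condExp (F.le t)).symm
      rw [e1]
      calc ∫ ω, (μ[(fun ω' => ‖u t ω' - ub ω'‖ ^ 2) | F t]) ω ∂μ
          ≤ ∫ _ω, σ ^ 2 ∂μ := integral_mono_ae integrable_condExp (integrable_const _) hv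
        _ = σ ^ 2 := by simp [measure_univ]
    have hubsq_le : ∫ ω, ‖ub ω‖ ^ 2 ∂μ ≤ c ^ 2 * ∫ ω, ‖g t ω‖ ^ 2 ∂μ := by
      rw [← integral_const_mul]
      refine integral_mono_ae hubsqint ((hgsqint t).const_mul _) ?_
      filter_upwards [hae2] with ω hω
      calc ‖ub ω‖ ^ 2 ≤ (c * ‖g t ω‖) ^ 2 := by
            apply pow_le_pow_left₀ (norm_nonneg _) hω.1
        _ = c ^ 2 * ‖g t ω‖ ^ 2 := by ring
    have I3 : ∫ ω, ‖u t ω‖ ^ 2 ∂μ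
        ≤ c ^ 2 * ∫ ω, ‖g t ω‖ ^ 2 ∂μ + σ ^ 2 := by
      have hptw : (fun ω => ‖u t ω‖ ^ 2)
          = fun ω => ‖ub ω‖ ^ 2 + 2 * ⟪ub ω, u t ω - ub ω⟫ + ‖u t ω - ub ω‖ ^ 2 := by
        funext ω
        have := norm_add_sq_real (ub ω) (u t ω - ub ω)
        rw [add_sub_cancel] at this
        linarith
      have hI2' : Integrable (fun ω => 2 * ⟪ub ω, u t ω - ub ω⟫) μ := by
        exact (memLp_integrable_inner hubL2 hdL2).const_mul 2
      have hI12 : Integrable (fun ω => ‖ub ω‖ ^ 2 + 2 * ⟪ub ω, u t ω - ub ω⟫) μ := by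
        exact hubsqint.add hI2'
      rw [hptw, integral_add hI12 hdsqint, integral_add hubsqint hI2',
        integral_const_mul, horth]
      linarith
    -- descent step
    have hdesc : ∫ ω, f (θ (t+1) ω) ∂μ
        ≤ ∫ ω, f (θ t ω) ∂μ - η * ∫ ω, ⟪g t ω, u t ω⟫ ∂μ
          + L / 2 * η ^ 2 * ∫ ω, ‖u t ω‖ ^ 2 ∂μ := by
      have hptw : ∀ ω, f (θ (t+1) ω)
          ≤ f (θ t ω) - η * ⟪g t ω, u t ω⟫ + L / 2 * η ^ 2 * ‖u t ω‖ ^ 2 := by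
        intro ω
        have hrw : θ (t+1) ω = θ t ω + (-(η • u t ω)) := by
          rw [hrec t ω]; abel
        have := descent_lemma f L hdiff hlip (θ t ω) (-(η • u t ω))
        rw [← hrw] at this
        have e1 : ⟪gradient f (θ t ω), -(η • u t ω)⟫ = -(η * ⟪g t ω, u t ω⟫) := by
          rw [inner_neg_right, real_inner_smul_right]
        have e2 : ‖-(η • u t ω)‖ ^ 2 = η ^ 2 * ‖u t ω‖ ^ 2 := by
          rw [norm_neg, norm_smul, Real.norm_eq_abs, abs_of_pos hη0, mul_pow]
        rw [e1, e2] at this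
        calc f (θ (t+1) ω) ≤ f (θ t ω) + -(η * ⟪g t ω, u t ω⟫)
              + L / 2 * (η ^ 2 * ‖u t ω‖ ^ 2) := this
          _ = f (θ t ω) - η * ⟪g t ω, u t ω⟫ + L / 2 * η ^ 2 * ‖u t ω‖ ^ 2 := by ring
      calc ∫ ω, f (θ (t+1) ω) ∂μ
          ≤ ∫ ω, (f (θ t ω) - η * ⟪g t ω, u t ω⟫ + L / 2 * η ^ 2 * ‖u t ω‖ ^ 2) ∂μ := by
            refine integral_mono (hfint (t+1)) ?_ hptw
            exact ((hfint t).sub (hinner_int.const_mul η)).add ((husqint t).const_mul _)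
        _ = ∫ ω, f (θ t ω) ∂μ - η * ∫ ω, ⟪g t ω, u t ω⟫ ∂μ
              + L / 2 * η ^ 2 * ∫ ω, ‖u t ω‖ ^ 2 ∂μ := by
            have hJ1 : Integrable (fun ω => η * ⟪g t ω, u t ω⟫) μ := by
              exact hinner_int.const_mul η
            have hJ2 : Integrable (fun ω => f (θ t ω) - η * ⟪g t ω, u t ω⟫) μ := by
              exact (hfint t).sub hJ1
            have hJ3 : Integrable (fun ω => L / 2 * η ^ 2 * ‖u t ω‖ ^ 2) μ := by
              exact (husqint t).const_mul _
            rw [integral_add hJ2 hJ3, integral_sub (hfint t) hJ1,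
              integral_const_mul, integral_const_mul]
    -- combine
    have hA := hgsqnonneg t
    have hP : muH * (1 - ρ) * ∫ ω, ‖g t ω‖ ^ 2 ∂μ ≤ ∫ ω, ⟪g t ω, u t ω⟫ ∂μ := by
      rw [I1]; exact I2
    set A := ∫ ω, ‖g t ω‖ ^ 2 ∂μ with hAdef
    set P := ∫ ω, ⟪g t ω, u t ω⟫ ∂μ with hPdef
    set U := ∫ ω, ‖u t ω‖ ^ 2 ∂μ with hUdef
    have m1 : L / 2 * η ^ 2 * U ≤ L / 2 * η ^ 2 * (c ^ 2 * A + σ ^ 2) :=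
      mul_le_mul_of_nonneg_left I3 (by positivity)
    have m2 : η * (muH * (1 - ρ) * A) ≤ η * P := mul_le_mul_of_nonneg_left hP hη0.le
    have m3 : L * η * c ^ 2 * A ≤ muH * (1 - ρ) * A := mul_le_mul_of_nonneg_right hstep hA
    have m3' : η / 2 * (L * η * c ^ 2 * A) ≤ η / 2 * (muH * (1 - ρ) * A) :=
      mul_le_mul_of_nonneg_left m3 (by positivity)
    linarith
  -- telescoping
  have hsum : ∀ n : ℕ, ∫ ω, f (θ n ω) ∂μ
      + η * muH * (1 - ρ) / 2 * ∑ t ∈ Finset.range n, ∫ ω, ‖g t ω‖ ^ 2 ∂μ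
      ≤ f θ0 + n * (L * η ^ 2 / 2 * σ ^ 2) := by
    intro n
    induction n with
    | zero =>
        simp [hθ0, measure_univ]
    | succ n ih =>
        have hk := key n
        rw [Finset.sum_range_succ]
        push_cast
        nlinarith [hgsqnonneg n]
  intro T hT
  have hTpos : (0:ℝ) < T := by exact_mod_cast hT
  have hlow : fstar ≤ ∫ ω, f (θ T ω) ∂μ := by
    calc fstar = ∫ _ω, fstar ∂μ := by simp [measure_univ]
      _ ≤ ∫ ω, f (θ T ω) ∂μ := integral_mono (integrable_const _) (hfint T)
          fun ω => hbdd _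
  have hS := hsum T
  set S := ∑ t ∈ Finset.range T, ∫ ω, ‖g t ω‖ ^ 2 ∂μ with hSdef
  have hSnonneg : 0 ≤ S := Finset.sum_nonneg fun t _ => hgsqnonneg t
  have hmain : η * muH * (1 - ρ) / 2 * S ≤ (f θ0 - fstar) + T * (L * η ^ 2 / 2 * σ ^ 2) := by
    linarith
  have hRHS : 2 * (f θ0 - fstar) / (η * T * muH * (1 - ρ)) + L * η * σ ^ 2 / (muH * (1 - ρ))
      = (2 * (f θ0 - fstar) + T * (L * η ^ 2 * σ ^ 2)) / (η * T * muH * (1 - ρ)) := by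
    field_simp
  rw [hRHS, one_div, inv_mul_eq_div, div_le_div_iff₀ hTpos (by positivity)]
  nlinarith
end

section
/- (Per-step descent inequality for a biased preconditioned step.) Let f : ℝ^d → ℝ be differentiable with L-Lipschitz gradient (L > 0), let θ ∈ ℝ^d, η > 0, 0 ≤ ρ < 1, σ ≥ 0, and let H be a symmetric d×d matrix with μ I ⪯ H ⪯ M I for 0 < μ ≤ M. Let û be a square-integrable ℝ^d-valued random vector such that the bias b := E[û] − H∇f(θ) satisfies ‖b‖ ≤ ρ μ ‖∇f(θ)‖ and E[‖û − E[û]‖²] ≤ σ². Then E[f(θ − η û)] ≤ f(θ) − ( η μ (1−ρ) − (L η²/2)(M + ρμ)² ) ‖∇f(θ)‖² + (L η² / 2) σ². -/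
open MeasureTheory
open scoped RealInnerProductSpace


lemma quad_bound' {d : ℕ} (f : EuclideanSpace ℝ (Fin d) → ℝ) (L : ℝ) (hL : 0 < L)
    (hdiff : Differentiable ℝ f)
    (hlip : ∀ x y, ‖gradient f x - gradient f y‖ ≤ L * ‖x - y‖)
    (x y : EuclideanSpace ℝ (Fin d)) :
    |f y - f x - ⟪gradient f x, y - x⟫| ≤ L / 2 * ‖y - x‖ ^ 2 := by
  set v := y - x with hv
  set g := gradient f x with hg
  have hline : ∀ t : ℝ, HasDerivAt (fun t : ℝ => f (x + t • v))
      ⟪gradient f (x + t • v), v⟫ t := by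
    intro t
    have h1 : HasDerivAt (fun t : ℝ => x + t • v) v t := by
      simpa using ((hasDerivAt_id t).smul_const v).const_add x
    have h2 := (hdiff (x + t • v)).hasGradientAt
    have h3 := h2.hasFDerivAt.comp_hasDerivAt t h1
    simpa [InnerProductSpace.toDual_apply_apply, Function.comp_def] using h3
  have hgc : Continuous (gradient f) :=
    (LipschitzWith.of_dist_le_mul (K := ⟨L, hL.le⟩) (fun a b => by
      rw [dist_eq_norm, dist_eq_norm]; exact hlip a b)).continuous
  have hcont : Continuous (fun t : ℝ => ⟪gradient f (x + t • v), v⟫) := by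
    exact (Continuous.inner (hgc.comp (by continuity)) continuous_const)
  have key : f y - f x = ∫ t in (0:ℝ)..1, ⟪gradient f (x + t • v), v⟫ := by
    have := intervalIntegral.integral_eq_sub_of_hasDerivAt
      (f := fun t : ℝ => f (x + t • v))
      (fun t _ => hline t) (hcont.intervalIntegrable 0 1)
    rw [this]
    simp [hv]
  have keyc : (⟪g, v⟫ : ℝ) = ∫ t in (0:ℝ)..1, ⟪g, v⟫ := by simp
  have key2 : f y - f x - ⟪g, v⟫
      = ∫ t in (0:ℝ)..1, ⟪gradient f (x + t • v) - g, v⟫ := by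
    rw [key, keyc, ← intervalIntegral.integral_sub (hcont.intervalIntegrable 0 1)
      (intervalIntegrable_const)]
    simp [inner_sub_left]
  rw [key2]
  have hub : ∀ t ∈ Set.uIoc (0:ℝ) 1, ‖(⟪gradient f (x + t • v) - g, v⟫ : ℝ)‖ ≤ L * ‖v‖ ^ 2 * t := by
    intro t ht
    rw [Set.uIoc_of_le (by norm_num)] at ht
    have h1 : ‖(⟪gradient f (x + t • v) - g, v⟫ : ℝ)‖ ≤ ‖gradient f (x + t • v) - g‖ * ‖v‖ :=
      norm_inner_le_norm _ _
    have h2 : ‖gradient f (x + t • v) - g‖ ≤ L * (t * ‖v‖) := by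
      have := hlip (x + t • v) x
      simpa [norm_smul, abs_of_nonneg ht.1.le] using this
    nlinarith [norm_nonneg v, ht.1.le]
  have hint : ∫ t in (0:ℝ)..1, L * ‖v‖ ^ 2 * t = L / 2 * ‖v‖ ^ 2 := by
    rw [intervalIntegral.integral_const_mul]
    simp [integral_id]
    ring
  have h5 := intervalIntegral.norm_integral_le_abs_of_norm_le
      (f := fun t : ℝ => (⟪gradient f (x + t • v) - g, v⟫ : ℝ))
      (g := fun t => L * ‖v‖ ^ 2 * t) (a := 0) (b := 1) (μ := MeasureTheory.volume)
      ((MeasureTheory.ae_restrict_iff' measurableSet_uIoc).mpr (MeasureTheory.ae_of_all _ hub))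
      (by apply Continuous.intervalIntegrable; continuity)
  rw [hint, abs_of_nonneg (by positivity)] at h5
  simpa using h5



lemma opnorm_bound' {d : ℕ} (T : EuclideanSpace ℝ (Fin d) →ₗ[ℝ] EuclideanSpace ℝ (Fin d))
    (hsym : ∀ x y, ⟪T x, y⟫ = ⟪x, T y⟫) (M : ℝ) (hM : 0 < M)
    (hpos : ∀ x, 0 ≤ ⟪x, T x⟫) (hub : ∀ x, ⟪x, T x⟫ ≤ M * ‖x‖ ^ 2)
    (g : EuclideanSpace ℝ (Fin d)) : ‖T g‖ ≤ M * ‖g‖ := by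
  have CS : ∀ x y : EuclideanSpace ℝ (Fin d), ⟪x, T y⟫ ^ 2 ≤ ⟪x, T x⟫ * ⟪y, T y⟫ := by
    intro x y
    have hq : ∀ t : ℝ, 0 ≤ ⟪y, T y⟫ * (t * t) + (2 * ⟪x, T y⟫) * t + ⟪x, T x⟫ := by
      intro t
      have h0 := hpos (x + t • y)
      have hexp : (⟪x + t • y, T (x + t • y)⟫ : ℝ)
          = ⟪y, T y⟫ * (t * t) + (2 * ⟪x, T y⟫) * t + ⟪x, T x⟫ := by
        rw [map_add, LinearMap.map_smul]
        rw [inner_add_left, inner_add_right, inner_add_right]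
        rw [real_inner_smul_left, real_inner_smul_left, real_inner_smul_right,
          real_inner_smul_right]
        rw [← hsym x y]
        rw [real_inner_comm (T x) y, hsym]
        ring
      linarith [hexp ▸ h0]
    have hd := discrim_le_zero hq
    rw [discrim] at hd
    nlinarith [hd]
  have h1 : (⟪g, T (T g)⟫ : ℝ) = ‖T g‖ ^ 2 := by
    rw [← hsym g (T g)]
    exact real_inner_self_eq_norm_sq _
  have h2 := CS g (T g)
  rw [h1] at h2
  have h3 := hub g
  have h4 := hub (T g)
  have h5 := hpos g
  have h6 := hpos (T g)
  have h7 : (‖T g‖ ^ 2) ^ 2 ≤ (M ^ 2 * ‖g‖ ^ 2) * ‖T g‖ ^ 2 := by nlinarith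
  rcases eq_or_lt_of_le (norm_nonneg (T g)) with hz | hz
  · rw [← hz]; positivity
  · have h8 : ‖T g‖ ^ 2 ≤ M ^ 2 * ‖g‖ ^ 2 := by
      have := mul_lt_mul_of_pos_right hz hz
      nlinarith
    have h9 : ‖T g‖ ^ 2 ≤ (M * ‖g‖) ^ 2 := by nlinarith
    exact (pow_le_pow_iff_left₀ (norm_nonneg _)
      (mul_nonneg hM.le (norm_nonneg g)) two_ne_zero).mp h9


set_option maxHeartbeats 1000000 in
/-- **Per-step descent inequality for a biased preconditioned step.**
For `f` differentiable with `L`-Lipschitz gradient, a symmetric `H` with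
`μ I ⪯ H ⪯ M I`, and a square-integrable random update `û` whose bias
`b = E[û] − H∇f(θ)` satisfies `‖b‖ ≤ ρμ‖∇f(θ)‖` and whose centered second moment is at
most `σ²`, one step `θ − η û` satisfies
`E[f(θ − ηû)] ≤ f(θ) − (ημ(1−ρ) − (Lη²/2)(M+ρμ)²)‖∇f(θ)‖² + (Lη²/2)σ²`. -/
theorem per_step_descent_inequality
    {Ω : Type*} [MeasurableSpace Ω] (μP : Measure Ω) [IsProbabilityMeasure μP]
    {d : ℕ} (f : EuclideanSpace ℝ (Fin d) → ℝ)
    (L : ℝ) (hL : 0 < L)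
    (hdiff : Differentiable ℝ f)
    (hlip : ∀ x y, ‖gradient f x - gradient f y‖ ≤ L * ‖x - y‖)
    (θ : EuclideanSpace ℝ (Fin d))
    (η ρ σ : ℝ) (hη : 0 < η) (hρ0 : 0 ≤ ρ) (hρ1 : ρ < 1) (hσ : 0 ≤ σ)
    (H : Matrix (Fin d) (Fin d) ℝ) (hsymm : H.IsSymm)
    (muH M : ℝ) (hmuH : 0 < muH) (hM : muH ≤ M)
    (hbounds : ∀ x : EuclideanSpace ℝ (Fin d),
      muH * ‖x‖ ^ 2 ≤ ⟪x, Matrix.toEuclideanLin H x⟫ ∧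
      ⟪x, Matrix.toEuclideanLin H x⟫ ≤ M * ‖x‖ ^ 2)
    (u : Ω → EuclideanSpace ℝ (Fin d))
    (hu2 : MemLp u 2 μP)
    (hb : ‖(∫ ω, u ω ∂μP) - Matrix.toEuclideanLin H (gradient f θ)‖
      ≤ ρ * muH * ‖gradient f θ‖)
    (hvar : ∫ ω, ‖u ω - ∫ ω', u ω' ∂μP‖ ^ 2 ∂μP ≤ σ ^ 2) :
    ∫ ω, f (θ - η • u ω) ∂μP
      ≤ f θ
        - (η * muH * (1 - ρ) - (L * η ^ 2 / 2) * (M + ρ * muH) ^ 2)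
          * ‖gradient f θ‖ ^ 2
        + (L * η ^ 2 / 2) * σ ^ 2 := by
  set g := gradient f θ with hgdef
  set T := Matrix.toEuclideanLin H with hTdef
  set ub := ∫ ω, u ω ∂μP with hubdef
  -- symmetry of T
  have hherm : H.IsHermitian := by
    rw [Matrix.IsHermitian, Matrix.conjTranspose_eq_transpose_of_trivial]; exact hsymm
  have hsymT : ∀ x y : EuclideanSpace ℝ (Fin d), ⟪T x, y⟫ = ⟪x, T y⟫ :=
    Matrix.isHermitian_iff_isSymmetric.mp hherm
  have hMpos : (0:ℝ) < M := lt_of_lt_of_le hmuH hM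
  have hTg : ‖T g‖ ≤ M * ‖g‖ :=
    opnorm_bound' T hsymT M hMpos
      (fun x => le_trans (mul_nonneg hmuH.le (sq_nonneg _)) (hbounds x).1)
      (fun x => (hbounds x).2) g
  -- integrability facts
  have huint : Integrable u μP := hu2.integrable one_le_two
  have hnormsq : Integrable (fun ω => ‖u ω‖ ^ 2) μP := hu2.norm.integrable_sq
  have hinner : Integrable (fun ω => (⟪g, u ω⟫ : ℝ)) μP := huint.const_inner g
  -- pointwise quadratic bound
  have hpt : ∀ ω, |f (θ - η • u ω) - f θ + η * ⟪g, u ω⟫|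
      ≤ (L * η ^ 2 / 2) * ‖u ω‖ ^ 2 := by
    intro ω
    have h := quad_bound' f L hL hdiff hlip θ (θ - η • u ω)
    have e1 : (θ - η • u ω) - θ = -(η • u ω) := by abel
    rw [e1] at h
    have e2 : (⟪g, -(η • u ω)⟫ : ℝ) = -(η * ⟪g, u ω⟫) := by
      rw [inner_neg_right, real_inner_smul_right]
    have e3 : ‖-(η • u ω)‖ ^ 2 = η ^ 2 * ‖u ω‖ ^ 2 := by
      rw [norm_neg, norm_smul, mul_pow]
      simp [abs_of_pos hη, sq_abs]
    rw [e2, e3] at h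
    have e4 : f (θ - η • u ω) - f θ + η * ⟪g, u ω⟫
        = f (θ - η • u ω) - f θ - (-(η * ⟪g, u ω⟫)) := by ring
    rw [e4]
    calc |f (θ - η • u ω) - f θ - (-(η * ⟪g, u ω⟫))|
        ≤ L / 2 * (η ^ 2 * ‖u ω‖ ^ 2) := h
      _ = (L * η ^ 2 / 2) * ‖u ω‖ ^ 2 := by ring
  -- integrability of the LHS
  have hFmeas : AEStronglyMeasurable (fun ω => f (θ - η • u ω)) μP := by
    have h1 : AEStronglyMeasurable (fun ω => θ - η • u ω) μP :=
      aestronglyMeasurable_const.sub (hu2.aestronglyMeasurable.const_smul η)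
    exact hdiff.continuous.comp_aestronglyMeasurable h1
  have hFint : Integrable (fun ω => f (θ - η • u ω)) μP := by
    have hbound : Integrable
        (fun ω => |f θ| + η * ‖g‖ * ‖u ω‖ + (L * η ^ 2 / 2) * ‖u ω‖ ^ 2) μP :=
      ((integrable_const _).add (huint.norm.const_mul _)).add (hnormsq.const_mul _)
    refine hbound.mono' hFmeas (ae_of_all _ fun ω => ?_)
    have h := hpt ω
    have h2 : |η * ⟪g, u ω⟫| ≤ η * ‖g‖ * ‖u ω‖ := by
      rw [abs_mul, abs_of_pos hη, mul_assoc]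
      exact mul_le_mul_of_nonneg_left (abs_real_inner_le_norm g (u ω)) hη.le
    rw [Real.norm_eq_abs]
    have e5 : f (θ - η • u ω)
        = (f (θ - η • u ω) - f θ + η * ⟪g, u ω⟫) + f θ + (-(η * ⟪g, u ω⟫)) := by ring
    rw [e5]
    refine (abs_add_three _ _ _).trans ?_
    rw [abs_neg]
    have h3 : |f θ| ≤ |f θ| := le_rfl
    linarith
  -- step 1: integral monotone
  have hRHSint : Integrable
      (fun ω => f θ - η * ⟪g, u ω⟫ + (L * η ^ 2 / 2) * ‖u ω‖ ^ 2) μP :=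
    ((integrable_const _).sub (hinner.const_mul η)).add (hnormsq.const_mul _)
  have hstep : ∫ ω, f (θ - η • u ω) ∂μP
      ≤ ∫ ω, (f θ - η * ⟪g, u ω⟫ + (L * η ^ 2 / 2) * ‖u ω‖ ^ 2) ∂μP := by
    refine integral_mono hFint hRHSint fun ω => ?_
    have h := (abs_le.mp (hpt ω)).2
    linarith
  -- compute the RHS integral
  have hI1 : ∫ ω, (⟪g, u ω⟫ : ℝ) ∂μP = ⟪g, ub⟫ := integral_inner huint g
  have hIa : Integrable (fun ω => f θ - η * ⟪g, u ω⟫) μP :=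
    (integrable_const _).sub (hinner.const_mul η)
  have hIb : Integrable (fun ω => (L * η ^ 2 / 2) * ‖u ω‖ ^ 2) μP := hnormsq.const_mul _
  have hIeq : ∫ ω, (f θ - η * ⟪g, u ω⟫ + (L * η ^ 2 / 2) * ‖u ω‖ ^ 2) ∂μP
      = f θ - η * ⟪g, ub⟫ + (L * η ^ 2 / 2) * ∫ ω, ‖u ω‖ ^ 2 ∂μP := by
    rw [integral_add hIa hIb, integral_sub (integrable_const _) (hinner.const_mul η),
      integral_const_mul, integral_const_mul, hI1]
    simp
  -- variance decomposition
  have hudiff : Integrable (fun ω => u ω - ub) μP := huint.sub (integrable_const _)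
  have hdsq : Integrable (fun ω => ‖u ω - ub‖ ^ 2) μP :=
    (hu2.sub (memLp_const ub)).norm.integrable_sq
  have hcross : ∫ ω, (⟪ub, u ω - ub⟫ : ℝ) ∂μP = 0 := by
    rw [integral_inner hudiff ub]
    have h0 : ∫ ω, (u ω - ub) ∂μP = 0 := by
      rw [integral_sub huint (integrable_const _)]
      simp [hubdef]
    rw [h0, inner_zero_right]
  have hsq : ∫ ω, ‖u ω‖ ^ 2 ∂μP = (∫ ω, ‖u ω - ub‖ ^ 2 ∂μP) + ‖ub‖ ^ 2 := by
    have hpw : (fun ω => ‖u ω‖ ^ 2)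
        = fun ω => ‖u ω - ub‖ ^ 2 + 2 * ⟪ub, u ω - ub⟫ + ‖ub‖ ^ 2 := by
      funext ω
      have h := norm_add_sq_real (u ω - ub) ub
      rw [sub_add_cancel] at h
      rw [h, real_inner_comm]
    have hJa : Integrable (fun ω => ‖u ω - ub‖ ^ 2 + 2 * ⟪ub, u ω - ub⟫) μP :=
      hdsq.add ((hudiff.const_inner ub).const_mul 2)
    have hJb : Integrable (fun ω => (2:ℝ) * ⟪ub, u ω - ub⟫) μP :=
      (hudiff.const_inner ub).const_mul 2
    rw [hpw, integral_add hJa (integrable_const _),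
      integral_add hdsq hJb, integral_const_mul, hcross]
    simp
  -- norm and inner product bounds
  have hbnorm : ‖ub‖ ≤ (M + ρ * muH) * ‖g‖ := by
    calc ‖ub‖ = ‖(ub - T g) + T g‖ := by rw [sub_add_cancel]
      _ ≤ ‖ub - T g‖ + ‖T g‖ := norm_add_le _ _
      _ ≤ ρ * muH * ‖g‖ + M * ‖g‖ := add_le_add hb hTg
      _ = (M + ρ * muH) * ‖g‖ := by ring
  have hub2 : ‖ub‖ ^ 2 ≤ (M + ρ * muH) ^ 2 * ‖g‖ ^ 2 := by
    have h1 : (0:ℝ) ≤ ‖ub‖ := norm_nonneg _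
    nlinarith [mul_nonneg (mul_nonneg hρ0 hmuH.le) (norm_nonneg g),
      mul_nonneg hMpos.le (norm_nonneg g)]
  have hinnerlb : muH * (1 - ρ) * ‖g‖ ^ 2 ≤ ⟪g, ub⟫ := by
    have h1 : (⟪g, ub⟫ : ℝ) = ⟪g, T g⟫ + ⟪g, ub - T g⟫ := by
      rw [inner_sub_right]; ring
    have h2 : |(⟪g, ub - T g⟫ : ℝ)| ≤ ρ * muH * ‖g‖ ^ 2 := by
      refine (abs_real_inner_le_norm _ _).trans ?_
      calc ‖g‖ * ‖ub - T g‖ ≤ ‖g‖ * (ρ * muH * ‖g‖) :=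
            mul_le_mul_of_nonneg_left hb (norm_nonneg g)
        _ = ρ * muH * ‖g‖ ^ 2 := by ring
    have h3 := (hbounds g).1
    have h4 := (abs_le.mp h2).1
    rw [h1]
    nlinarith
  -- put everything together
  have hc : (0:ℝ) ≤ L * η ^ 2 / 2 := by positivity
  rw [hIeq, hsq] at hstep
  have hV : ∫ ω, ‖u ω - ub‖ ^ 2 ∂μP ≤ σ ^ 2 := hvar
  have hfin1 := mul_le_mul_of_nonneg_left hV hc
  have hfin2 := mul_le_mul_of_nonneg_left hub2 hc
  have hfin3 := mul_le_mul_of_nonneg_left hinnerlb hη.le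
  nlinarith [hstep]
end
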